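/- Define operators on L²(ℝ²ⁿ): for a Schwartz function f(x,y,r) and fixed r, r' ∈ ℝ, let (π_r ⊠ π_{r'})(f)ξ(u,v) = ∫ f(x,y,r+r') ē(η_λ(r)β(u, e^{λr'}y)) ē(η_λ(r')β(v,y)) ξ(u+e^{λr'}x, v+x) dx dy and (π_{r'} ⊠ π_r)(f)ξ(v,u) = ∫ f(x,y,r+r') ē(η_λ(r')β(v, e^{λr}y)) ē(η_λ(r)β(u,y)) ξ(v+e^{λr}x, u+x) dx dy. Then the unitary T: L²(ℝ²ⁿ) → L²(ℝ²ⁿ), Tξ(v,u) = e^{-nλr/2}e^{-nλr'/2} ξ(e^{-λr'}u + (e^{λr'}-e^{-λr'})e^{-λr}v, e^{-λr}v), satisfies T∘(π_r⊠π_{r'})(f) = (π_{r'}⊠π_r)(f)∘T for every Schwartz f. -/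

import Mathlib

open MeasureTheory

noncomputable section

/-- The standard inner product on `ℝⁿ`. -/
def beta {n : ℕ} (x y : Fin n → ℝ) : ℝ := ∑ i, x i * y i

/-- `ē(t) = e^{-2πit}`. -/
def ebar (t : ℝ) : ℂ := Complex.exp (-(2 * Real.pi * t) * Complex.I)

/-- `η_λ(r) = (e^{2λr}-1)/(2λ)`. -/
def eta (l r : ℝ) : ℝ := (Real.exp (2 * l * r) - 1) / (2 * l)

/-- The inner tensor product representation `(π_r ⊠ π_{r'})(f)` on `L²(ℝ²ⁿ)`;
the argument `p = (u,v)`: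
`(π_r ⊠ π_{r'})(f)ξ(u,v) = ∫ f(x,y,r+r') ē(η_λ(r)β(u, e^{λr'}y))
  ē(η_λ(r')β(v,y)) ξ(u+e^{λr'}x, v+x) dx dy`. -/
def piBox {n : ℕ} (l r r' : ℝ)
    (f : SchwartzMap ((Fin n → ℝ) × (Fin n → ℝ) × ℝ) ℂ)
    (ξ : (Fin n → ℝ) × (Fin n → ℝ) → ℂ) :
    (Fin n → ℝ) × (Fin n → ℝ) → ℂ :=
  fun p => ∫ x : Fin n → ℝ, ∫ y : Fin n → ℝ,
    f (x, y, r + r') * ebar (eta l r * beta p.1 (Real.exp (l * r') • y)) *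
      ebar (eta l r' * beta p.2 y) *
      ξ (p.1 + Real.exp (l * r') • x, p.2 + x)

/-- The intertwining unitary `T : L²(ℝ²ⁿ) → L²(ℝ²ⁿ)`; the argument `p = (v,u)`:
`Tξ(v,u) = e^{-nλr/2}e^{-nλr'/2}
  ξ(e^{-λr'}u + (e^{λr'}-e^{-λr'})e^{-λr}v, e^{-λr}v)`. -/
def Tint {n : ℕ} (l r r' : ℝ) (ξ : (Fin n → ℝ) × (Fin n → ℝ) → ℂ) :
    (Fin n → ℝ) × (Fin n → ℝ) → ℂ :=
  fun p => (Real.exp (-((n : ℝ) * (l * r)) / 2) *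
      Real.exp (-((n : ℝ) * (l * r')) / 2) : ℝ) *
    ξ (Real.exp (-(l * r')) • p.2 +
        ((Real.exp (l * r') - Real.exp (-(l * r'))) * Real.exp (-(l * r))) • p.1,
      Real.exp (-(l * r)) • p.1)

lemma beta_add_left {n : ℕ} (x w y : Fin n → ℝ) :
    beta (x + w) y = beta x y + beta w y := by
  simp [beta, add_mul, Finset.sum_add_distrib]

lemma beta_smul_left {n : ℕ} (c : ℝ) (x y : Fin n → ℝ) :
    beta (c • x) y = c * beta x y := by
  simp [beta, Finset.mul_sum, mul_assoc]

lemma beta_smul_right {n : ℕ} (c : ℝ) (x y : Fin n → ℝ) :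
    beta x (c • y) = c * beta x y := by
  simp only [beta, Finset.mul_sum, Pi.smul_apply, smul_eq_mul]
  exact Finset.sum_congr rfl fun i _ => by ring

lemma ebar_add (s t : ℝ) : ebar (s + t) = ebar s * ebar t := by
  rw [ebar, ebar, ebar, ← Complex.exp_add]
  congr 1
  push_cast
  ring

/-- `T` intertwines the inner tensor products: for every Schwartz `f` and
`ξ ∈ L²(ℝ²ⁿ)` one has `T∘(π_r⊠π_{r'})(f)ξ = (π_{r'}⊠π_r)(f)(Tξ)` (as elements
of `L²`, i.e. almost everywhere).  Note that `(π_{r'}⊠π_r)(f)` is `piBox` with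
the roles of `r` and `r'` interchanged. -/
theorem stmt_17 {n : ℕ} (l : ℝ) (hl : l ≠ 0) (r r' : ℝ)
    (f : SchwartzMap ((Fin n → ℝ) × (Fin n → ℝ) × ℝ) ℂ)
    (ξ : (Fin n → ℝ) × (Fin n → ℝ) → ℂ)
    (hξ : MemLp ξ 2 (volume : Measure ((Fin n → ℝ) × (Fin n → ℝ)))) :
    ∀ᵐ p ∂(volume : Measure ((Fin n → ℝ) × (Fin n → ℝ))),
      Tint l r r' (piBox l r r' f ξ) p = piBox l r' r f (Tint l r r' ξ) p := by
  filter_upwards with p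
  obtain ⟨v, u⟩ := p
  have ha0 : Real.exp (l * r) ≠ 0 := (Real.exp_pos _).ne'
  have hb0 : Real.exp (l * r') ≠ 0 := (Real.exp_pos _).ne'
  have hai : Real.exp (-(l * r)) = (Real.exp (l * r))⁻¹ := Real.exp_neg _
  have hbi : Real.exp (-(l * r')) = (Real.exp (l * r'))⁻¹ := Real.exp_neg _
  have h2a : Real.exp (2 * l * r) = Real.exp (l * r) * Real.exp (l * r) := by
    rw [← Real.exp_add]; ring_nf
  have h2b : Real.exp (2 * l * r') = Real.exp (l * r') * Real.exp (l * r') := by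
    rw [← Real.exp_add]; ring_nf
  simp only [Tint, piBox]
  rw [← integral_const_mul]
  refine integral_congr_ae (Filter.Eventually.of_forall fun x => ?_)
  dsimp only
  rw [← integral_const_mul]
  refine integral_congr_ae (Filter.Eventually.of_forall fun y => ?_)
  dsimp only
  have harg1 : Real.exp (-(l * r')) • (u + x) +
      ((Real.exp (l * r') - Real.exp (-(l * r'))) * Real.exp (-(l * r))) • (v + Real.exp (l * r) • x)
      = (Real.exp (-(l * r')) • u +
        ((Real.exp (l * r') - Real.exp (-(l * r'))) * Real.exp (-(l * r))) • v) +
        Real.exp (l * r') • x := by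
    funext i
    simp only [Pi.add_apply, Pi.smul_apply, smul_eq_mul, hai, hbi]
    field_simp
    ring
  have harg2 : Real.exp (-(l * r)) • (v + Real.exp (l * r) • x)
      = Real.exp (-(l * r)) • v + x := by
    funext i
    simp only [Pi.add_apply, Pi.smul_apply, smul_eq_mul, hai]
    field_simp
  have hphase :
      eta l r * beta (Real.exp (-(l * r')) • u +
          ((Real.exp (l * r') - Real.exp (-(l * r'))) * Real.exp (-(l * r))) • v)
          (Real.exp (l * r') • y) +
        eta l r' * beta (Real.exp (-(l * r)) • v) y
      = eta l r' * beta v (Real.exp (l * r) • y) + eta l r * beta u y := by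
    simp only [beta_add_left, beta_smul_left, beta_smul_right, eta, hai, hbi, h2a, h2b]
    field_simp
    ring
  have hebar := (ebar_add _ _).symm.trans ((congrArg ebar hphase).trans (ebar_add _ _))
  rw [harg1, harg2, add_comm r' r]
  calc (↑(Real.exp (-(↑n * (l * r)) / 2) * Real.exp (-(↑n * (l * r')) / 2)) : ℂ) *
        (f (x, y, r + r') *
          ebar (eta l r * beta (Real.exp (-(l * r')) • u +
            ((Real.exp (l * r') - Real.exp (-(l * r'))) * Real.exp (-(l * r))) • v)
            (Real.exp (l * r') • y)) *
          ebar (eta l r' * beta (Real.exp (-(l * r)) • v) y) *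
          ξ ((Real.exp (-(l * r')) • u +
              ((Real.exp (l * r') - Real.exp (-(l * r'))) * Real.exp (-(l * r))) • v) +
              Real.exp (l * r') • x,
             Real.exp (-(l * r)) • v + x))
      = f (x, y, r + r') *
          (ebar (eta l r * beta (Real.exp (-(l * r')) • u +
            ((Real.exp (l * r') - Real.exp (-(l * r'))) * Real.exp (-(l * r))) • v)
            (Real.exp (l * r') • y)) *
          ebar (eta l r' * beta (Real.exp (-(l * r)) • v) y)) *
          ((↑(Real.exp (-(↑n * (l * r)) / 2) * Real.exp (-(↑n * (l * r')) / 2)) : ℂ) *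
          ξ ((Real.exp (-(l * r')) • u +
              ((Real.exp (l * r') - Real.exp (-(l * r'))) * Real.exp (-(l * r))) • v) +
              Real.exp (l * r') • x,
             Real.exp (-(l * r)) • v + x)) := by ring
    _ = _ := by rw [hebar]; ring
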